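/- Let X and Y be measurable spaces equipped with σ-finite measures μ and ν, and let π be a joint probability density on X×Y with respect to μ⊗ν, with x-marginal π_X and conditional densities π(y|x). Let Q be a measurably parameterized family of joint probability densities on X×Y, each of whose x-marginal equals π_X for μ-almost every x. Let (Π_n) be a sequence of probability measures on Q such that for every δ > 0, Π_n({q ∈ Q : H(π, q) > δ}) → 0 as n → ∞, where H is the Hellinger distance between joint densities. Then the posterior predictive conditional densities π_n(y|x) = ∫_Q q(y|x) dΠ_n(q) satisfy ∫_X π_X(x) · H(π_n(·|x), π(·|x)) dμ(x) → 0 as n → ∞. -/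

import Mathlib

open MeasureTheory Filter

/-- Hellinger distance between two densities `p`, `q` with respect to a measure `m`:
`H(p,q) = (∫ (√p − √q)² dm)^{1/2}`. -/
noncomputable def hell {Z : Type*} [MeasurableSpace Z] (m : Measure Z) (p q : Z → ℝ) : ℝ :=
  Real.sqrt (∫ z, (Real.sqrt (p z) - Real.sqrt (q z)) ^ 2 ∂m)

lemma hell_aux_integrable {Z : Type*} [MeasurableSpace Z] {m : Measure Z} {f : Z → ℝ}
    (h : ∫ z, f z ∂m = 1) : Integrable f m := by
  by_contra h'
  rw [integral_undef h'] at h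
  norm_num at h

/-- Cauchy–Schwarz for integrals, sqrt form. -/
lemma hell_aux_cs {α : Type*} [MeasurableSpace α] (P : Measure α) {f g : α → ℝ}
    (hf : Integrable f P) (hg : Integrable g P)
    (hf0 : 0 ≤ᵐ[P] f) (hg0 : 0 ≤ᵐ[P] g) :
    ∫ a, Real.sqrt (f a) * Real.sqrt (g a) ∂P ≤
      Real.sqrt (∫ a, f a ∂P) * Real.sqrt (∫ a, g a ∂P) := by
  have hconj : Real.HolderConjugate 2 2 := ⟨by norm_num, by norm_num, by norm_num⟩
  have hfm : MemLp (fun a => Real.sqrt (f a)) 2 P := by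
    rw [memLp_two_iff_integrable_sq ((Real.continuous_sqrt.comp_aestronglyMeasurable hf.aestronglyMeasurable))]
    refine hf.congr ?_
    filter_upwards [hf0] with a ha
    rw [Real.sq_sqrt ha]
  have hgm : MemLp (fun a => Real.sqrt (g a)) 2 P := by
    rw [memLp_two_iff_integrable_sq ((Real.continuous_sqrt.comp_aestronglyMeasurable hg.aestronglyMeasurable))]
    refine hg.congr ?_
    filter_upwards [hg0] with a ha
    rw [Real.sq_sqrt ha]
  have h := integral_mul_le_Lp_mul_Lq_of_nonneg hconj
    (f := fun a => Real.sqrt (f a)) (g := fun a => Real.sqrt (g a))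
    (Eventually.of_forall fun a => Real.sqrt_nonneg _)
    (Eventually.of_forall fun a => Real.sqrt_nonneg _) (by simpa using hfm) (by simpa using hgm)
  calc ∫ a, Real.sqrt (f a) * Real.sqrt (g a) ∂P
      ≤ (∫ a, Real.sqrt (f a) ^ (2:ℝ) ∂P) ^ (1/(2:ℝ)) *
        (∫ a, Real.sqrt (g a) ^ (2:ℝ) ∂P) ^ (1/(2:ℝ)) := h
    _ = Real.sqrt (∫ a, f a ∂P) * Real.sqrt (∫ a, g a ∂P) := by
        have e1 : ∫ a, Real.sqrt (f a) ^ (2:ℝ) ∂P = ∫ a, f a ∂P := by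
          refine integral_congr_ae ?_
          filter_upwards [hf0] with a ha
          rw [Real.rpow_two, Real.sq_sqrt ha]
        have e2 : ∫ a, Real.sqrt (g a) ^ (2:ℝ) ∂P = ∫ a, g a ∂P := by
          refine integral_congr_ae ?_
          filter_upwards [hg0] with a ha
          rw [Real.rpow_two, Real.sq_sqrt ha]
        rw [e1, e2, Real.sqrt_eq_rpow, Real.sqrt_eq_rpow]

/-- Jensen for sqrt on a probability space. -/
lemma hell_aux_jensen {α : Type*} [MeasurableSpace α] (P : Measure α) [IsProbabilityMeasure P]
    {f : α → ℝ} (hf : Integrable f P) (hf0 : 0 ≤ᵐ[P] f) :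
    ∫ a, Real.sqrt (f a) ∂P ≤ Real.sqrt (∫ a, f a ∂P) := by
  have h := hell_aux_cs P hf (integrable_const 1) hf0 (Eventually.of_forall fun _ => zero_le_one)
  simpa using h

lemma hell_nonneg {Z : Type*} [MeasurableSpace Z] (m : Measure Z) (p q : Z → ℝ) :
    0 ≤ hell m p q := Real.sqrt_nonneg _

lemma hell_sq {Z : Type*} [MeasurableSpace Z] (m : Measure Z) (p q : Z → ℝ) :
    hell m p q ^ 2 = ∫ z, (Real.sqrt (p z) - Real.sqrt (q z)) ^ 2 ∂m :=
  Real.sq_sqrt (integral_nonneg fun z => sq_nonneg _)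

lemma sqsub_le {a b : ℝ} (ha : 0 ≤ a) (hb : 0 ≤ b) :
    (Real.sqrt a - Real.sqrt b) ^ 2 ≤ a + b := by
  nlinarith [Real.sq_sqrt ha, Real.sq_sqrt hb, Real.sqrt_nonneg a, Real.sqrt_nonneg b,
    mul_nonneg (Real.sqrt_nonneg a) (Real.sqrt_nonneg b)]

lemma integrable_sqsub {Z : Type*} [MeasurableSpace Z] {m : Measure Z} {p q : Z → ℝ}
    (hp : Integrable p m) (hq : Integrable q m)
    (hp0 : ∀ z, 0 ≤ p z) (hq0 : ∀ z, 0 ≤ q z) :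
    Integrable (fun z => (Real.sqrt (p z) - Real.sqrt (q z)) ^ 2) m := by
  refine Integrable.mono (hp.add hq) ?_ ?_
  · exact ((Real.continuous_sqrt.comp_aestronglyMeasurable hp.aestronglyMeasurable).sub
      (Real.continuous_sqrt.comp_aestronglyMeasurable hq.aestronglyMeasurable)).pow 2
  · refine Eventually.of_forall fun z => ?_
    simp only [Pi.add_apply]
    rw [Real.norm_of_nonneg (sq_nonneg _), Real.norm_of_nonneg (add_nonneg (hp0 z) (hq0 z))]
    exact sqsub_le (hp0 z) (hq0 z)

lemma hell_sq_le_two {Z : Type*} [MeasurableSpace Z] {m : Measure Z} {p q : Z → ℝ}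
    (hp : Integrable p m) (hq : Integrable q m)
    (hp0 : ∀ z, 0 ≤ p z) (hq0 : ∀ z, 0 ≤ q z)
    (hp1 : ∫ z, p z ∂m = 1) (hq1 : ∫ z, q z ∂m = 1) :
    hell m p q ^ 2 ≤ 2 := by
  rw [hell_sq]
  calc ∫ z, (Real.sqrt (p z) - Real.sqrt (q z)) ^ 2 ∂m
      ≤ ∫ z, (p z + q z) ∂m := by
        refine integral_mono (integrable_sqsub hp hq hp0 hq0) (hp.add hq) fun z => ?_
        exact sqsub_le (hp0 z) (hq0 z)
    _ = 2 := by rw [integral_add hp hq, hp1, hq1]; norm_num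

lemma hell_aux_meas_int {A B : Type*} [MeasurableSpace A] [MeasurableSpace B]
    (ν : Measure B) [SFinite ν] {f : A × B → ℝ} (hf : Measurable f) :
    Measurable fun a => ∫ b, f (a, b) ∂ν :=
  (hf.stronglyMeasurable.integral_prod_right').measurable


lemma hell_aux_amgm {a b : ℝ} (ha : 0 ≤ a) (hb : 0 ≤ b) :
    Real.sqrt a * Real.sqrt b ≤ (a + b) / 2 := by
  nlinarith [sq_nonneg (Real.sqrt a - Real.sqrt b), Real.sq_sqrt ha, Real.sq_sqrt hb]

lemma hell_aux_int_mul_sqrt {α : Type*} [MeasurableSpace α] {P : Measure α} {f g : α → ℝ}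
    (hf : Integrable f P) (hg : Integrable g P)
    (hf0 : ∀ a, 0 ≤ f a) (hg0 : ∀ a, 0 ≤ g a) :
    Integrable (fun a => Real.sqrt (f a) * Real.sqrt (g a)) P := by
  refine Integrable.mono' ((hf.add hg).div_const 2) ?_ ?_
  · exact (Real.continuous_sqrt.comp_aestronglyMeasurable hf.aestronglyMeasurable).mul
      (Real.continuous_sqrt.comp_aestronglyMeasurable hg.aestronglyMeasurable)
  · refine Eventually.of_forall fun a => ?_
    rw [Real.norm_of_nonneg (mul_nonneg (Real.sqrt_nonneg _) (Real.sqrt_nonneg _))]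
    exact hell_aux_amgm (hf0 a) (hg0 a)

/-- Posterior consistency implies convergence of the posterior
predictive to the true conditional in expected Hellinger distance: let `π` be a joint
probability density on `X × Y` with x-marginal `π_X` and conditionals
`π(y|x) = π(x,y)/π_X(x)`; let `q` be a measurably parameterized family of joint
probability densities, each with x-marginal equal to `π_X` μ-a.e., and let `(Π_n)` be
probability measures on the parameter space with
`Π_n({i : H(π, q_i) > δ}) → 0` for every `δ > 0`.  Then the posterior predictive
conditional densities `π_n(y|x) = ∫ q_i(y|x) dΠ_n(i)` (with
`q_i(y|x) = q_i(x,y)/q_{i,X}(x)`) satisfy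
`∫ π_X(x) · H(π_n(·|x), π(·|x)) dμ(x) → 0`. -/
theorem stmt2 {X Y Q : Type*}
    [MeasurableSpace X] [MeasurableSpace Y] [MeasurableSpace Q]
    (μ : Measure X) (ν : Measure Y) [SigmaFinite μ] [SigmaFinite ν]
    (ptrue : X × Y → ℝ)
    (hπm : Measurable ptrue) (hπ0 : ∀ z, 0 ≤ ptrue z)
    (hπ1 : ∫ z, ptrue z ∂(μ.prod ν) = 1)
    (pX : X → ℝ) (hpX : ∀ x, pX x = ∫ y, ptrue (x, y) ∂ν)
    (q : Q → X × Y → ℝ)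
    (hqm : Measurable (Function.uncurry q))
    (hq0 : ∀ i z, 0 ≤ q i z)
    (hq1 : ∀ i, ∫ z, q i z ∂(μ.prod ν) = 1)
    (hqmarg : ∀ i, ∀ᵐ x ∂μ, (∫ y, q i (x, y) ∂ν) = pX x)
    (Pn : ℕ → Measure Q) (hprob : ∀ n, IsProbabilityMeasure (Pn n))
    (hcons : ∀ δ : ℝ, 0 < δ →
      Tendsto (fun n => Pn n {i | δ < hell (μ.prod ν) ptrue (q i)}) atTop (nhds 0)) :
    Tendsto (fun n => ∫ x, pX x *
        hell ν (fun y => ∫ i, q i (x, y) / (∫ y', q i (x, y') ∂ν) ∂(Pn n))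
               (fun y => ptrue (x, y) / pX x) ∂μ) atTop (nhds 0) := by
  classical
  have hπint : Integrable ptrue (μ.prod ν) := hell_aux_integrable hπ1
  have hqint : ∀ i, Integrable (q i) (μ.prod ν) := fun i => hell_aux_integrable (hq1 i)
  have hpXeq : pX = fun x => ∫ y, ptrue (x, y) ∂ν := funext hpX
  have hpX0 : ∀ x, 0 ≤ pX x := fun x => by
    rw [hpX x]; exact integral_nonneg fun y => hπ0 _
  have mpX : Measurable pX := by rw [hpXeq]; exact hell_aux_meas_int ν hπm
  have hpXint : Integrable pX μ := by rw [hpXeq]; exact hπint.integral_prod_left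
  have hpX1 : ∫ x, pX x ∂μ = 1 := by
    rw [hpXeq, ← MeasureTheory.integral_prod _ hπint]; exact hπ1
  set Hi : Q → ℝ := fun i => hell (μ.prod ν) ptrue (q i) with hHidef
  have mHi : Measurable Hi := by
    have hf : Measurable fun p : Q × (X × Y) =>
        (Real.sqrt (ptrue p.2) - Real.sqrt (q p.1 p.2)) ^ 2 := by
      have h1 : Measurable fun p : Q × (X × Y) => ptrue p.2 := hπm.comp measurable_snd
      have h2 : Measurable fun p : Q × (X × Y) => q p.1 p.2 := hqm
      exact ((h1.sqrt).sub (h2.sqrt)).pow_const 2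
    exact (hell_aux_meas_int (μ.prod ν) hf).sqrt
  have hHi0 : ∀ i, 0 ≤ Hi i := fun i => hell_nonneg _ _ _
  have hHi2 : ∀ i, Hi i ^ 2 ≤ 2 := fun i =>
    hell_sq_le_two hπint (hqint i) hπ0 (hq0 i) hπ1 (hq1 i)
  set K : Q → X → ℝ :=
    fun i x => ∫ y, (Real.sqrt (ptrue (x, y)) - Real.sqrt (q i (x, y))) ^ 2 ∂ν with hKdef
  have hK0 : ∀ i x, 0 ≤ K i x := fun i x => integral_nonneg fun y => sq_nonneg _
  have hSint : ∀ i, Integrable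
      (fun z => (Real.sqrt (ptrue z) - Real.sqrt (q i z)) ^ 2) (μ.prod ν) :=
    fun i => integrable_sqsub hπint (hqint i) hπ0 (hq0 i)
  have hKint : ∀ i, Integrable (K i) μ := fun i => (hSint i).integral_prod_left
  have hKval : ∀ i, ∫ x, K i x ∂μ = Hi i ^ 2 := by
    intro i
    rw [hHidef]
    rw [hell_sq, MeasureTheory.integral_prod _ (hSint i)]
  have mK : Measurable (Function.uncurry K) := by
    have hf : Measurable fun r : (Q × X) × Y =>
        (Real.sqrt (ptrue (r.1.2, r.2)) - Real.sqrt (q r.1.1 (r.1.2, r.2))) ^ 2 := by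
      have he : Measurable fun r : (Q × X) × Y => (r.1.2, r.2) :=
        (measurable_fst.snd).prodMk measurable_snd
      have h1 : Measurable fun r : (Q × X) × Y => ptrue (r.1.2, r.2) := hπm.comp he
      have h2 : Measurable fun r : (Q × X) × Y => q r.1.1 (r.1.2, r.2) :=
        hqm.comp ((measurable_fst.fst).prodMk he)
      exact ((h1.sqrt).sub (h2.sqrt)).pow_const 2
    exact hell_aux_meas_int ν hf
  -- the key per-n bound
  have key : ∀ n, (∫ x, pX x *
      hell ν (fun y => ∫ i, q i (x, y) / (∫ y', q i (x, y') ∂ν) ∂(Pn n))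
             (fun y => ptrue (x, y) / pX x) ∂μ) ≤
      Real.sqrt (∫ i, Hi i ^ 2 ∂(Pn n)) := by
    intro n
    haveI : IsProbabilityMeasure (Pn n) := hprob n
    set P : Measure Q := Pn n with hPdef
    -- a.e. facts in x
    have hae1 : ∀ᵐ x ∂μ, Integrable (fun y => ptrue (x, y)) ν := hπint.prod_right_ae
    have hae2 : ∀ᵐ x ∂μ, ∀ᵐ i ∂P, (∫ y, q i (x, y) ∂ν) = pX x := by
      have hmeas : MeasurableSet {p : Q × X | (∫ y, q p.1 (p.2, y) ∂ν) = pX p.2} := by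
        have h1 : Measurable fun p : Q × X => ∫ y, q p.1 (p.2, y) ∂ν := by
          have hf : Measurable fun r : (Q × X) × Y => q r.1.1 (r.1.2, r.2) :=
            hqm.comp ((measurable_fst.fst).prodMk
              ((measurable_fst.snd).prodMk measurable_snd))
          exact hell_aux_meas_int ν hf
        exact measurableSet_eq_fun h1 (mpX.comp measurable_snd)
      exact (Measure.ae_ae_comm (μ := P) (ν := μ) hmeas).1 (ae_of_all _ fun i => hqmarg i)
    have hae3 : ∀ᵐ x ∂μ, ∀ᵐ i ∂P, Integrable (fun y => q i (x, y)) ν := by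
      have hlme : Measurable fun p : Q × X => ∫⁻ y, ENNReal.ofReal (q p.1 (p.2, y)) ∂ν := by
        have hf : Measurable fun r : (Q × X) × Y => ENNReal.ofReal (q r.1.1 (r.1.2, r.2)) :=
          ENNReal.measurable_ofReal.comp (hqm.comp ((measurable_fst.fst).prodMk
            ((measurable_fst.snd).prodMk measurable_snd)))
        exact hf.lintegral_prod_right'
      have hmeas : MeasurableSet
          {p : Q × X | (∫⁻ y, ENNReal.ofReal (q p.1 (p.2, y)) ∂ν) < ⊤} :=
        measurableSet_lt hlme measurable_const
      have hall : ∀ i, ∀ᵐ x ∂μ, (∫⁻ y, ENNReal.ofReal (q i (x, y)) ∂ν) < ⊤ := by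
        intro i
        filter_upwards [(hqint i).prod_right_ae] with x hx
        exact (hasFiniteIntegral_iff_ofReal
          (ae_of_all _ fun y => hq0 i (x, y))).1 hx.hasFiniteIntegral
      have hsw := (Measure.ae_ae_comm (μ := P) (ν := μ) hmeas).1 (ae_of_all _ hall)
      filter_upwards [hsw] with x hx
      filter_upwards [hx] with i hi
      refine ⟨(hqm.comp (measurable_const.prodMk
        (measurable_const.prodMk measurable_id))).aestronglyMeasurable, ?_⟩
      exact (hasFiniteIntegral_iff_ofReal (ae_of_all _ fun y => hq0 i (x, y))).2 hi
    -- pointwise bound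
    have hptw : ∀ᵐ x ∂μ, pX x *
        hell ν (fun y => ∫ i, q i (x, y) / (∫ y', q i (x, y') ∂ν) ∂P)
               (fun y => ptrue (x, y) / pX x) ≤
        Real.sqrt (pX x) * Real.sqrt (∫ i, K i x ∂P) := by
      filter_upwards [hae1, hae2, hae3] with x hx1 hx2 hx3
      by_cases hc0 : pX x = 0
      · rw [hc0, zero_mul]
        exact mul_nonneg (Real.sqrt_nonneg _) (Real.sqrt_nonneg _)
      have hc : 0 < pX x := lt_of_le_of_ne (hpX0 x) (Ne.symm hc0)
      -- slice measurability
      have msl : ∀ i, Measurable fun y => q i (x, y) := fun i =>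
        hqm.comp (measurable_const.prodMk (measurable_const.prodMk measurable_id))
      have mb : Measurable fun y => ptrue (x, y) :=
        hπm.comp (measurable_const.prodMk measurable_id)
      set g : Q × Y → ℝ := fun p => q p.1 (x, p.2) with hgdef
      have mg : Measurable g :=
        hqm.comp (measurable_fst.prodMk (measurable_const.prodMk measurable_snd))
      have hgint : Integrable g (P.prod ν) := by
        refine (integrable_prod_iff mg.aestronglyMeasurable).2 ⟨hx3, ?_⟩
        refine (integrable_const (pX x)).congr ?_
        filter_upwards [hx2, hx3] with i h2 h3
        calc (pX x) = ∫ y, q i (x, y) ∂ν := (h2).symm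
          _ = ∫ y, ‖g (i, y)‖ ∂ν :=
            integral_congr_ae (ae_of_all _ fun y => (Real.norm_of_nonneg (hq0 i (x, y))).symm)
      set φ : Y → ℝ := fun y => ∫ i, q i (x, y) ∂P with hφdef
      have hφint : Integrable φ ν := hgint.integral_prod_right
      have hφ0 : ∀ y, 0 ≤ φ y := fun y => integral_nonneg fun i => hq0 i _
      have mφ : Measurable φ := by
        rw [hφdef]
        exact hell_aux_meas_int (A := Y) P
          (hqm.comp (measurable_snd.prodMk (measurable_const.prodMk measurable_fst)))
      have hφ1 : ∫ y, φ y ∂ν = pX x := by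
        have hsw := integral_integral_swap (f := fun i y => g (i, y)) hgint
        rw [hφdef]
        rw [show (∫ y, (∫ i, q i (x, y) ∂P) ∂ν) = ∫ i, (∫ y, g (i, y) ∂ν) ∂P from hsw.symm]
        have : ∀ᵐ i ∂P, (∫ y, g (i, y) ∂ν) = pX x := hx2
        rw [integral_congr_ae this]
        simp
      -- rewrite the predictive conditional
      have hpred : (fun y => ∫ i, q i (x, y) / (∫ y', q i (x, y') ∂ν) ∂P) =
          fun y => φ y / pX x := by
        funext y
        have h : ∀ᵐ i ∂P, q i (x, y) / (∫ y', q i (x, y') ∂ν) = q i (x, y) / pX x :=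
          hx2.mono fun i hi => by rw [hi]
        rw [integral_congr_ae h, integral_div]
      rw [hpred]
      -- compute the hellinger distance
      set D : ℝ := ∫ y, (Real.sqrt (φ y) - Real.sqrt (ptrue (x, y))) ^ 2 ∂ν with hDdef
      have hD0 : 0 ≤ D := integral_nonneg fun y => sq_nonneg _
      have hellval : hell ν (fun y => φ y / pX x) (fun y => ptrue (x, y) / pX x) =
          Real.sqrt D / Real.sqrt (pX x) := by
        unfold hell
        have hptw2 : ∀ y, (Real.sqrt (φ y / pX x) - Real.sqrt (ptrue (x, y) / pX x)) ^ 2 =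
            (Real.sqrt (φ y) - Real.sqrt (ptrue (x, y))) ^ 2 / pX x := fun y => by
          rw [Real.sqrt_div (hφ0 y), Real.sqrt_div (hπ0 _), div_sub_div_same, div_pow,
            Real.sq_sqrt hc.le]
        rw [integral_congr_ae (ae_of_all _ hptw2), integral_div, Real.sqrt_div hD0]
      rw [hellval]
      have hlhs : pX x * (Real.sqrt D / Real.sqrt (pX x)) =
          Real.sqrt (pX x) * Real.sqrt D := by
        rw [show pX x * (Real.sqrt D / Real.sqrt (pX x)) =
          Real.sqrt D * (pX x / Real.sqrt (pX x)) from by ring, Real.div_sqrt, mul_comm]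
      rw [hlhs]
      refine mul_le_mul_of_nonneg_left (Real.sqrt_le_sqrt ?_) (Real.sqrt_nonneg _)
      -- main inequality : D ≤ ∫ K dP
      have hbφint : Integrable (fun y => Real.sqrt (ptrue (x, y)) * Real.sqrt (φ y)) ν :=
        hell_aux_int_mul_sqrt hx1 hφint (fun y => hπ0 _) hφ0
      have hDexp : D = pX x + pX x - 2 * ∫ y, Real.sqrt (ptrue (x, y)) * Real.sqrt (φ y) ∂ν := by
        rw [hDdef]
        have hpw : ∀ y, (Real.sqrt (φ y) - Real.sqrt (ptrue (x, y))) ^ 2 =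
            (φ y + ptrue (x, y)) - 2 * (Real.sqrt (ptrue (x, y)) * Real.sqrt (φ y)) := fun y => by
          rw [sub_sq, Real.sq_sqrt (hφ0 y), Real.sq_sqrt (hπ0 _)]; ring
        rw [integral_congr_ae (ae_of_all _ hpw),
          integral_sub (show Integrable (fun y => φ y + ptrue (x, y)) ν from hφint.add hx1) (hbφint.const_mul 2),
          integral_add hφint hx1, integral_const_mul, hφ1, ← hpX x]
      set h : Q × Y → ℝ := fun p => Real.sqrt (ptrue (x, p.2)) * Real.sqrt (g p) with hhdef
      have mh : Measurable h :=
        ((hπm.comp (measurable_const.prodMk measurable_snd)).sqrt).mul mg.sqrt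
      have hhint : Integrable h (P.prod ν) := by
        refine (integrable_prod_iff mh.aestronglyMeasurable).2 ⟨?_, ?_⟩
        · filter_upwards [hx3] with i hi
          exact hell_aux_int_mul_sqrt hx1 hi (fun y => hπ0 _) (fun y => hq0 i _)
        · refine Integrable.mono' (integrable_const (pX x))
            (hell_aux_meas_int ν mh.norm).aestronglyMeasurable ?_
          filter_upwards [hx2, hx3] with i h2 h3
          have hnn : 0 ≤ ∫ y, ‖h (i, y)‖ ∂ν := integral_nonneg fun y => norm_nonneg _
          rw [Real.norm_of_nonneg hnn]
          have heq : (fun y => ‖h (i, y)‖) =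
              fun y => Real.sqrt (ptrue (x, y)) * Real.sqrt (q i (x, y)) := funext fun y =>
            Real.norm_of_nonneg (mul_nonneg (Real.sqrt_nonneg _) (Real.sqrt_nonneg _))
          rw [heq]
          calc ∫ y, Real.sqrt (ptrue (x, y)) * Real.sqrt (q i (x, y)) ∂ν
              ≤ ∫ y, (ptrue (x, y) + q i (x, y)) / 2 ∂ν := by
                refine integral_mono
                  (hell_aux_int_mul_sqrt hx1 h3 (fun y => hπ0 _) (fun y => hq0 i _))
                  ((hx1.add h3).div_const 2) fun y => hell_aux_amgm (hπ0 _) (hq0 i _)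
            _ = pX x := by
                rw [integral_div, integral_add hx1 h3, h2, ← hpX x]
                ring
      have hJint : Integrable (fun i => ∫ y, h (i, y) ∂ν) P := hhint.integral_prod_left
      have hKae : ∀ᵐ i ∂P, K i x = pX x + pX x - 2 * ∫ y, h (i, y) ∂ν := by
        filter_upwards [hx2, hx3] with i h2 h3
        have hbqint : Integrable (fun y => Real.sqrt (ptrue (x, y)) * Real.sqrt (q i (x, y))) ν :=
          hell_aux_int_mul_sqrt hx1 h3 (fun y => hπ0 _) (fun y => hq0 i _)
        have hpw : ∀ y, (Real.sqrt (ptrue (x, y)) - Real.sqrt (q i (x, y))) ^ 2 =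
            (ptrue (x, y) + q i (x, y)) -
              2 * (Real.sqrt (ptrue (x, y)) * Real.sqrt (q i (x, y))) := fun y => by
          rw [sub_sq, Real.sq_sqrt (hπ0 _), Real.sq_sqrt (hq0 i _)]; ring
        calc K i x = ∫ y, ((ptrue (x, y) + q i (x, y)) -
              2 * (Real.sqrt (ptrue (x, y)) * Real.sqrt (q i (x, y)))) ∂ν :=
            integral_congr_ae (ae_of_all _ hpw)
          _ = pX x + pX x - 2 * ∫ y, h (i, y) ∂ν := by
            rw [integral_sub (show Integrable (fun y => ptrue (x, y) + q i (x, y)) ν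
                from hx1.add h3) (hbqint.const_mul 2),
              integral_add hx1 h3, integral_const_mul, h2, ← hpX x]
      have hKint2 : ∫ i, K i x ∂P = pX x + pX x - 2 * ∫ i, (∫ y, h (i, y) ∂ν) ∂P := by
        rw [integral_congr_ae hKae,
          integral_sub (integrable_const _) (hJint.const_mul 2), integral_const_mul]
        simp
      have hswap : ∫ i, (∫ y, h (i, y) ∂ν) ∂P = ∫ y, (∫ i, h (i, y) ∂P) ∂ν :=
        integral_integral_swap (f := fun i y => h (i, y)) hhint
      have hjen : ∀ᵐ y ∂ν, (∫ i, h (i, y) ∂P) ≤ Real.sqrt (ptrue (x, y)) * Real.sqrt (φ y) := by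
        filter_upwards [hgint.prod_left_ae] with y hy
        have h1 : ∫ i, h (i, y) ∂P =
            Real.sqrt (ptrue (x, y)) * ∫ i, Real.sqrt (q i (x, y)) ∂P := by
          show ∫ i, Real.sqrt (ptrue (x, y)) * Real.sqrt (q i (x, y)) ∂P = _
          exact integral_const_mul _ _
        rw [h1]
        refine mul_le_mul_of_nonneg_left ?_ (Real.sqrt_nonneg _)
        exact hell_aux_jensen P hy (ae_of_all _ fun i => hq0 i _)
      have hcross : ∫ y, (∫ i, h (i, y) ∂P) ∂ν ≤
          ∫ y, Real.sqrt (ptrue (x, y)) * Real.sqrt (φ y) ∂ν :=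
        integral_mono_ae hhint.integral_prod_right hbφint hjen
      rw [hDexp, hKint2, hswap]
      linarith
    -- assemble
    have hKprod : Integrable (Function.uncurry K) (P.prod μ) := by
      refine (integrable_prod_iff mK.aestronglyMeasurable).2
        ⟨ae_of_all _ fun i => hKint i, ?_⟩
      have heq : (fun i => ∫ x, ‖Function.uncurry K (i, x)‖ ∂μ) = fun i => Hi i ^ 2 := by
        funext i
        rw [← hKval i]
        exact integral_congr_ae (ae_of_all _ fun x => Real.norm_of_nonneg (hK0 i x))
      rw [heq]
      exact ⟨(mHi.pow_const 2).aestronglyMeasurable,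
        HasFiniteIntegral.of_bounded (C := 2) (ae_of_all _ fun i => by
          rw [Real.norm_of_nonneg (sq_nonneg _)]; exact hHi2 i)⟩
    have hLint : Integrable (fun x => ∫ i, K i x ∂P) μ := hKprod.integral_prod_right
    have hL0 : ∀ x, 0 ≤ ∫ i, K i x ∂P := fun x => integral_nonneg fun i => hK0 i x
    have hRint : Integrable (fun x => Real.sqrt (pX x) * Real.sqrt (∫ i, K i x ∂P)) μ :=
      hell_aux_int_mul_sqrt hpXint hLint hpX0 hL0
    calc ∫ x, pX x *
          hell ν (fun y => ∫ i, q i (x, y) / (∫ y', q i (x, y') ∂ν) ∂P)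
                 (fun y => ptrue (x, y) / pX x) ∂μ
        ≤ ∫ x, Real.sqrt (pX x) * Real.sqrt (∫ i, K i x ∂P) ∂μ :=
          integral_mono_of_nonneg
            (ae_of_all _ fun x => mul_nonneg (hpX0 x) (hell_nonneg _ _ _)) hRint hptw
      _ ≤ Real.sqrt (∫ x, pX x ∂μ) * Real.sqrt (∫ x, (∫ i, K i x ∂P) ∂μ) :=
          hell_aux_cs μ hpXint hLint (ae_of_all _ hpX0) (ae_of_all _ hL0)
      _ = Real.sqrt (∫ i, Hi i ^ 2 ∂P) := by
          rw [hpX1, Real.sqrt_one, one_mul]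
          congr 1
          rw [← integral_integral_swap (f := K) hKprod]
          exact integral_congr_ae (ae_of_all _ hKval)
  -- splitting bound
  have bnd : ∀ δ : ℝ, 0 < δ → ∀ n, ∫ i, Hi i ^ 2 ∂(Pn n) ≤
      δ ^ 2 + 2 * (Pn n {i | δ < Hi i}).toReal := by
    intro δ hδ n
    haveI := hprob n
    set s : Set Q := {i | δ < Hi i} with hs_def
    have hs : MeasurableSet s := measurableSet_lt measurable_const mHi
    have int2 : Integrable (fun i => Hi i ^ 2) (Pn n) :=
      ⟨(mHi.pow_const 2).aestronglyMeasurable,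
        HasFiniteIntegral.of_bounded (C := 2) (ae_of_all _ fun i => by
          rw [Real.norm_of_nonneg (sq_nonneg _)]; exact hHi2 i)⟩
    have hsplit : ∫ i, Hi i ^ 2 ∂(Pn n) =
        (∫ i in s, Hi i ^ 2 ∂(Pn n)) + ∫ i in sᶜ, Hi i ^ 2 ∂(Pn n) :=
      (integral_add_compl hs int2).symm
    have h1 : ∫ i in s, Hi i ^ 2 ∂(Pn n) ≤ 2 * (Pn n s).toReal := by
      calc ∫ i in s, Hi i ^ 2 ∂(Pn n) ≤ ∫ _i in s, (2:ℝ) ∂(Pn n) :=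
            setIntegral_mono_on int2.integrableOn (integrableOn_const (measure_ne_top _ _)) hs (fun i _ => hHi2 i)
        _ = 2 * (Pn n s).toReal := by rw [setIntegral_const, smul_eq_mul, mul_comm]; rfl
    have h2 : ∫ i in sᶜ, Hi i ^ 2 ∂(Pn n) ≤ δ ^ 2 := by
      calc ∫ i in sᶜ, Hi i ^ 2 ∂(Pn n) ≤ ∫ _i in sᶜ, δ ^ 2 ∂(Pn n) := by
            refine setIntegral_mono_on int2.integrableOn (integrableOn_const (measure_ne_top _ _)) hs.compl (fun i hi => ?_)
            have : Hi i ≤ δ := not_lt.1 hi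
            exact pow_le_pow_left₀ (hHi0 i) this 2
        _ = (Pn n sᶜ).toReal * δ ^ 2 := by rw [setIntegral_const, smul_eq_mul]; rfl
        _ ≤ 1 * δ ^ 2 := by
            refine mul_le_mul_of_nonneg_right ?_ (sq_nonneg _)
            exact ENNReal.toReal_le_of_le_ofReal zero_le_one (by
              simpa using prob_le_one (μ := Pn n) (s := sᶜ))
        _ = δ ^ 2 := one_mul _
    rw [hsplit]
    linarith
  -- conclusion
  have hA0 : ∀ n, 0 ≤ ∫ x, pX x *
      hell ν (fun y => ∫ i, q i (x, y) / (∫ y', q i (x, y') ∂ν) ∂(Pn n))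
             (fun y => ptrue (x, y) / pX x) ∂μ :=
    fun n => integral_nonneg fun x => mul_nonneg (hpX0 x) (hell_nonneg _ _ _)
  refine Metric.tendsto_atTop.2 fun ε hε => ?_
  have hδ : (0:ℝ) < ε / 2 := by positivity
  have hev : ∀ᶠ n in atTop,
      Pn n {i | ε / 2 < hell (μ.prod ν) ptrue (q i)} < ENNReal.ofReal (ε ^ 2 / 8) := by
    refine (hcons (ε / 2) hδ).eventually_lt_const ?_
    exact ENNReal.ofReal_pos.2 (by positivity)
  obtain ⟨N, hN⟩ := eventually_atTop.1 hev
  refine ⟨N, fun n hn => ?_⟩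
  have hset : {i | ε / 2 < Hi i} = {i | ε / 2 < hell (μ.prod ν) ptrue (q i)} := rfl
  have ht : (Pn n {i | ε / 2 < Hi i}).toReal < ε ^ 2 / 8 := by
    rw [hset]
    exact (ENNReal.lt_ofReal_iff_toReal_lt (measure_ne_top _ _)).1 (hN n hn)
  have hb : ∫ i, Hi i ^ 2 ∂(Pn n) ≤ (ε / 2) ^ 2 + 2 * (Pn n {i | ε / 2 < Hi i}).toReal :=
    bnd (ε / 2) hδ n
  have hlt : ∫ i, Hi i ^ 2 ∂(Pn n) < ε ^ 2 := by nlinarith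
  have hfin : Real.sqrt (∫ i, Hi i ^ 2 ∂(Pn n)) < ε := by
    have := Real.sqrt_lt_sqrt (integral_nonneg fun i => sq_nonneg _) hlt
    rwa [Real.sqrt_sq hε.le] at this
  rw [Real.dist_eq, sub_zero, abs_of_nonneg (hA0 n)]
  exact lt_of_le_of_lt (key n) hfin
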